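/- If gcd(p',q') = 1 (with p'+q'-1 = n), then the permutation g on [0,n-1] is an n-cycle: the orbit of any element is all of [0,n-1]. -/
import Mathlib


def g (p' q' i : ℕ) : ℕ :=
  if i + 1 < q' then i + p' else if i + 1 = q' then p' - 1 else i - q'

/-- auxiliary full-cycle step on `[0, p'+q'-1]` -/
def hstep (p' q' x : ℕ) : ℕ := (x + p') % (p' + q')

lemma hstep_iter_lt (p' q' : ℕ) (hp : 1 ≤ p') (hq : 1 ≤ q') :
    ∀ k i, i < p' + q' → (hstep p' q')^[k] i < p' + q' := by
  intro k
  induction k with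
  | zero => intro i hi; simpa using hi
  | succ t ih =>
    intro i hi
    rw [Function.iterate_succ_apply']
    exact Nat.mod_lt _ (by omega)

lemma g_eq_hstep (p' q' : ℕ) (hp : 1 ≤ p') (hq : 1 ≤ q') (x : ℕ) (hx : x < p' + q' - 1)
    (hne : hstep p' q' x ≠ p' + q' - 1) : g p' q' x = hstep p' q' x := by
  unfold g hstep at *
  rcases lt_trichotomy (x + 1) q' with h1 | h1 | h1
  · rw [if_pos h1, Nat.mod_eq_of_lt (by omega)]
  · exfalso; apply hne
    rw [Nat.mod_eq_of_lt (by omega)]; omega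
  · rw [if_neg (by omega), if_neg (by omega),
      Nat.mod_eq_sub_mod (by omega), Nat.mod_eq_of_lt (by omega)]
    omega

lemma g_eq_skip (p' q' : ℕ) (hp : 1 ≤ p') (hq : 1 ≤ q') (x : ℕ) (hx : x < p' + q' - 1)
    (hne : hstep p' q' x = p' + q' - 1) : g p' q' x = hstep p' q' (p' + q' - 1) := by
  have hx' : x + 1 = q' := by
    unfold hstep at hne
    rcases lt_trichotomy (x + 1) q' with h1 | h1 | h1
    · rw [Nat.mod_eq_of_lt (by omega)] at hne; omega
    · exact h1
    · rw [Nat.mod_eq_sub_mod (by omega), Nat.mod_eq_of_lt (by omega)] at hne; omega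
  unfold g hstep
  rw [if_neg (by omega), if_pos hx',
    Nat.mod_eq_sub_mod (by omega), Nat.mod_eq_of_lt (by omega)]
  omega

lemma reach (p' q' : ℕ) (hp : 1 ≤ p') (hq : 1 ≤ q') :
    ∀ k i, i < p' + q' - 1 → (hstep p' q')^[k] i ≠ p' + q' - 1 →
      ∃ m', (g p' q')^[m'] i = (hstep p' q')^[k] i := by
  intro k
  induction k using Nat.strong_induction_on with
  | _ k ih =>
    match k with
    | 0 => intro i hi _; exact ⟨0, rfl⟩
    | (s + 1) =>
      intro i hi hne
      rw [Function.iterate_succ_apply'] at hne ⊢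
      by_cases hx : (hstep p' q')^[s] i = p' + q' - 1
      · -- the previous point is n itself; skip it
        match s with
        | 0 => simp at hx; omega
        | (t + 1) =>
          rw [Function.iterate_succ_apply'] at hx
          have hy : (hstep p' q')^[t] i ≠ p' + q' - 1 := by
            intro h; rw [h] at hx
            unfold hstep at hx
            rw [Nat.mod_eq_sub_mod (by omega), Nat.mod_eq_of_lt (by omega)] at hx
            omega
          have hylt : (hstep p' q')^[t] i < p' + q' - 1 := by
            have := hstep_iter_lt p' q' hp hq t i (by omega)
            omega
          obtain ⟨m', hm⟩ := ih t (by omega) i hi hy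
          refine ⟨m' + 1, ?_⟩
          rw [Function.iterate_succ_apply', hm,
            g_eq_skip p' q' hp hq _ hylt hx, Function.iterate_succ_apply', hx]
      · have hxlt : (hstep p' q')^[s] i < p' + q' - 1 := by
          have := hstep_iter_lt p' q' hp hq s i (by omega)
          omega
        obtain ⟨m', hm⟩ := ih s (by omega) i hi hx
        refine ⟨m' + 1, ?_⟩
        rw [Function.iterate_succ_apply', hm, g_eq_hstep p' q' hp hq _ hxlt hne]

lemma hstep_iter_eq (p' q' : ℕ) (hp : 1 ≤ p') (hq : 1 ≤ q') :
    ∀ k i, i < p' + q' → (hstep p' q')^[k] i = (i + k * p') % (p' + q') := by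
  intro k
  induction k with
  | zero =>
    intro i hi
    simp [Nat.mod_eq_of_lt hi]
  | succ t ih =>
    intro i hi
    rw [Function.iterate_succ_apply', ih i hi]
    unfold hstep
    rw [Nat.mod_add_mod]
    ring_nf

theorem stmt_18 (p' q' n : ℕ) (hp : 1 ≤ p') (hq : 1 ≤ q') (hn : p' + q' - 1 = n)
    (hl : Nat.gcd p' q' = 1) :
    ∀ i < n, ∀ j < n, ∃ k : ℕ, (g p' q')^[k] i = j := by
  intro i hi j hj
  subst hn
  set m := p' + q' with hm
  haveI : NeZero m := ⟨by omega⟩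
  have hcop : Nat.Coprime p' m := by
    show Nat.Coprime p' (p' + q')
    rw [Nat.add_comm]
    exact Nat.coprime_add_self_right.mpr hl
  have hu : IsUnit (p' : ZMod m) := by
    have := (ZMod.unitOfCoprime p' hcop).isUnit
    rwa [ZMod.coe_unitOfCoprime] at this
  obtain ⟨c, hc⟩ : ∃ c : ZMod m, c * (p' : ZMod m) = (j : ZMod m) - i := by
    refine ⟨((j : ZMod m) - i) * ↑hu.unit⁻¹, ?_⟩
    have h1 : (↑hu.unit⁻¹ : ZMod m) * ↑hu.unit = 1 := hu.val_inv_mul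
    rw [hu.unit_spec] at h1
    rw [mul_assoc, h1, mul_one]
  have hcast : ((i + c.val * p' : ℕ) : ZMod m) = (j : ZMod m) := by
    push_cast
    rw [ZMod.natCast_val, ZMod.cast_id, hc]
    ring
  have hmod : (i + c.val * p') % m = j := by
    have h2 : (i + c.val * p') % m = j % m :=
      (ZMod.natCast_eq_natCast_iff _ _ _).mp hcast
    rw [h2, Nat.mod_eq_of_lt (by omega)]
  have hiter : (hstep p' q')^[c.val] i = j := by
    rw [hstep_iter_eq p' q' hp hq c.val i (by omega), hmod]
  have := reach p' q' hp hq c.val i hi (by rw [hiter]; omega)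
  rw [hiter] at this
  exact this
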